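/- If (A − 2Θ R_c, C) is detectable (i.e., there exists G₁ with A − G₁C − 2Θ R_c Hurwitz) and (A + 2Θ R_c, B₂) is controllable, then for any monic real polynomial p of degree n there exist matrices G₁ and H such that the 2n×2n closed-loop matrix 𝒜 = [[A, B₂H + 2Θ R_c], [G₁C + 2Θ R_c^T, A − G₁C + B₂H]] (with R_c symmetric) has characteristic polynomial p(s)·det(sI − A + G₁C + 2Θ R_c), where A + B₂H + 2Θ R_c has characteristic polynomial p and A − G₁C − 2Θ R_c is Hurwitz. -/

import Mathlib

open Matrix Kronecker Polynomial


def Jmat : Matrix (Fin 2) (Fin 2) ℝ := !![0, 1; -1, 0]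

/-- `Θ_n = I_{n/2} ⊗ J`, realized on the index type `Fin m × Fin 2` (so `n = 2m`). -/
def Theta (m : ℕ) : Matrix (Fin m × Fin 2) (Fin m × Fin 2) ℝ :=
  (1 : Matrix (Fin m) (Fin m) ℝ) ⊗ₖ Jmat

/-- A real square matrix is Hurwitz if all its (complex) eigenvalues have
strictly negative real part. -/
def IsHurwitz {ι : Type*} [Fintype ι] [DecidableEq ι] (M : Matrix ι ι ℝ) : Prop :=
  ∀ z ∈ spectrum ℂ (M.map (Complex.ofReal)), z.re < 0

/-- `(M, B)` is controllable: the controllability matrix `[B, MB, …, M^{n-1}B]`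
has full row rank `n`. -/
def Controllable {ι κ : Type*} [Fintype ι] [Fintype κ] [DecidableEq ι]
    (M : Matrix ι ι ℝ) (B : Matrix ι κ ℝ) : Prop :=
  (Matrix.of (fun (i : ι) (jk : Fin (Fintype.card ι) × κ) =>
    (M ^ (jk.1 : ℕ) * B) i jk.2)).rank = Fintype.card ι

namespace PolePlace

open Submodule Set Module

variable {V : Type*} [AddCommGroup V] [Module ℝ V]

lemma constr_mem {ι : Type*} [Fintype ι] (b : Basis ι ℝ V) (u : ι → V)
    (S : Submodule ℝ V) (hu : ∀ i, u i ∈ S) (v : V) : b.constr ℝ u v ∈ S := by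
  rw [← b.sum_repr v, map_sum]
  refine Submodule.sum_mem _ fun i _ => ?_
  rw [_root_.map_smul, b.constr_basis]
  exact Submodule.smul_mem _ _ (hu i)

noncomputable def zvec (g : V →ₗ[ℝ] V) (p : ℝ[X]) (w : V) (n i : ℕ) : V :=
  ∑ j ∈ Finset.range (n - i), p.coeff (i + 1 + j) • (g ^ j) w

lemma zvec_rec (g : V →ₗ[ℝ] V) (p : ℝ[X]) (w : V) {n i : ℕ} (hi : i < n) :
    zvec g p w n i = g (zvec g p w n (i + 1)) + p.coeff (i + 1) • w := by
  unfold zvec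
  rw [map_sum]
  have hn : n - i = (n - (i + 1)) + 1 := by omega
  rw [hn, Finset.sum_range_succ']
  have h0 : p.coeff (i + 1 + 0) • ((g ^ 0) w) = p.coeff (i + 1) • w := by simp
  rw [h0]
  congr 1
  refine Finset.sum_congr rfl fun j _ => ?_
  rw [_root_.map_smul, show i + 1 + (j + 1) = i + 1 + 1 + j by omega, pow_succ' g j]
  rfl

lemma zvec_zero (g : V →ₗ[ℝ] V) {p : ℝ[X]} (w : V) {n : ℕ} (hp : p.natDegree ≤ n) :
    g (zvec g p w n 0) + p.coeff 0 • w = (Polynomial.aeval g p) w := by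
  rw [Polynomial.aeval_eq_sum_range' (Nat.lt_succ_of_le hp)]
  rw [LinearMap.sum_apply]
  simp only [LinearMap.smul_apply]
  rw [Finset.sum_range_succ']
  unfold zvec
  rw [map_sum, Nat.sub_zero]
  congr 1
  refine Finset.sum_congr rfl fun j _ => ?_
  rw [_root_.map_smul, show 0 + 1 + j = j + 1 by omega, pow_succ' g j]
  rfl

lemma zvec_last (g : V →ₗ[ℝ] V) {p : ℝ[X]} (w : V) {n : ℕ} (hpn : p.coeff n = 1)
    (hn : 0 < n) : zvec g p w n (n - 1) = w := by
  unfold zvec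
  have : n - (n - 1) = 1 := by omega
  rw [this, Finset.sum_range_one]
  have : n - 1 + 1 + 0 = n := by omega
  rw [this, hpn, pow_zero, one_smul]
  rfl

lemma top_le_span_zvec {n : ℕ} (g : V →ₗ[ℝ] V) (p : ℝ[X]) (w : V) (hpn : p.coeff n = 1)
    (hspan : ⊤ ≤ span ℝ (range fun i : Fin n => (g ^ (i : ℕ)) w)) :
    ⊤ ≤ span ℝ (range fun i : Fin n => zvec g p w n i) := by
  refine le_trans hspan (span_le.mpr ?_)
  rintro _ ⟨i, rfl⟩
  have H : ∀ k : ℕ, k < n → (g ^ k) w ∈ span ℝ (range fun i : Fin n => zvec g p w n i) := by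
    intro k
    induction k using Nat.strong_induction_on with
    | _ k ih =>
      intro hk
      have hz : zvec g p w n (n - 1 - k)
          = (g ^ k) w + ∑ j ∈ Finset.range k, p.coeff (n - k + j) • (g ^ j) w := by
        unfold zvec
        have h1 : n - (n - 1 - k) = k + 1 := by omega
        rw [h1, Finset.sum_range_succ]
        have h2 : n - 1 - k + 1 + k = n := by omega
        rw [h2, hpn, one_smul, add_comm]
        congr 1
        refine Finset.sum_congr rfl fun j _ => ?_
        rw [show n - 1 - k + 1 + j = n - k + j by omega]
      have heq : (g ^ k) w
          = zvec g p w n (n - 1 - k) - ∑ j ∈ Finset.range k, p.coeff (n - k + j) • (g ^ j) w := by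
        rw [hz]; abel
      rw [heq]
      refine Submodule.sub_mem _ (subset_span ⟨⟨n - 1 - k, by omega⟩, rfl⟩)
        (Submodule.sum_mem _ fun j hj => by
          have hj' : j < k := Finset.mem_range.mp hj
          exact Submodule.smul_mem _ _ (ih j hj' (by omega)))
  exact H i i.2


lemma cyclic_pole_place [FiniteDimensional ℝ V] (f : V →ₗ[ℝ] V) (w : V) {n : ℕ}
    (hn : n = Module.finrank ℝ V) (hn0 : 0 < n)
    (hspan : ⊤ ≤ span ℝ (range fun i : Fin n => (f ^ (i : ℕ)) w))
    (P : ℝ[X]) (hP : P.Monic) (hPd : P.natDegree = n) :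
    ∃ ψ : V →ₗ[ℝ] V, (∀ v, ψ v ∈ span ℝ ({w} : Set V)) ∧ (f + ψ).charpoly = P := by
  set a := f.charpoly with ha
  have haM : a.Monic := f.charpoly_monic
  have had : a.natDegree = n := by rw [ha, f.charpoly_natDegree, hn]
  have han : a.coeff n = 1 := by rw [← had]; exact haM.coeff_natDegree
  have hPn : P.coeff n = 1 := by rw [← hPd]; exact hP.coeff_natDegree
  set z : ℕ → V := zvec f a w n with hzdef
  have hztop : ⊤ ≤ span ℝ (range fun i : Fin n => z i) := top_le_span_zvec f a w han hspan
  have hcard : Fintype.card (Fin n) = finrank ℝ V := by simpa using hn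
  let bz : Basis (Fin n) ℝ V :=
    basisOfTopLeSpanOfCardEqFinrank (fun i : Fin n => z i) hztop hcard
  have hbz : ∀ i : Fin n, bz i = z i := fun i => by
    rw [coe_basisOfTopLeSpanOfCardEqFinrank]
  set ψ : V →ₗ[ℝ] V := bz.constr ℝ (fun i : Fin n => (a.coeff i - P.coeff i) • w) with hψ
  have hψz : ∀ i : Fin n, ψ (z i) = (a.coeff (i : ℕ) - P.coeff (i : ℕ)) • w := fun i => by
    rw [← hbz i, hψ, Basis.constr_basis]
  have hψmem : ∀ v, ψ v ∈ span ℝ ({w} : Set V) := fun v =>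
    constr_mem bz _ _ (fun i => Submodule.smul_mem _ _ (Submodule.mem_span_singleton_self w)) v
  set h := f + ψ with hh
  -- f (z 0) = - (a.coeff 0 • w)
  have hf0 : f (z 0) = -(a.coeff 0 • w) := by
    have h1 := zvec_zero f w (le_of_eq had)
    rw [f.aeval_self_charpoly] at h1
    simp only [LinearMap.zero_apply] at h1
    rw [← hzdef] at h1
    linear_combination (norm := module) h1
  -- h (z 0) = -(P.coeff 0 • w)
  have hh0 : h (z 0) = -(P.coeff 0 • w) := by
    have hz0 : ψ (z 0) = (a.coeff 0 - P.coeff 0) • w := by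
      have := hψz ⟨0, hn0⟩; simpa using this
    rw [hh]
    simp only [LinearMap.add_apply]
    rw [hf0, hz0]
    module
  -- h (z (i+1)) = z i - P.coeff (i+1) • w   for i+1 < n
  have hstep : ∀ i : ℕ, i + 1 < n → h (z (i + 1)) = z i - P.coeff (i + 1) • w := by
    intro i hi
    have hrec : z i = f (z (i + 1)) + a.coeff (i + 1) • w := zvec_rec f a w (by omega)
    have hz1 : ψ (z (i + 1)) = (a.coeff (i + 1) - P.coeff (i + 1)) • w := by
      have := hψz ⟨i + 1, hi⟩; simpa using this
    rw [hh]
    simp only [LinearMap.add_apply]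
    rw [hz1]
    have : f (z (i+1)) = z i - a.coeff (i + 1) • w := by rw [hrec]; abel
    rw [this]
    module
  -- zvec h P agrees with z
  have hzz : ∀ k : ℕ, k < n → zvec h P w n (n - 1 - k) = z (n - 1 - k) := by
    intro k
    induction k with
    | zero =>
      intro _
      simp only [Nat.sub_zero]
      rw [zvec_last h w hPn hn0, hzdef, zvec_last f w han hn0]
    | succ k ihk =>
      intro hk
      have hk' : k < n := by omega
      have hne : n - 1 - (k + 1) < n := by omega
      rw [zvec_rec h P w hne]
      have hidx : n - 1 - (k + 1) + 1 = n - 1 - k := by omega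
      rw [hidx, ihk hk']
      by_cases hc : n - 1 - k = 0
      · -- then k = n - 1, contradicting k + 1 < n
        omega
      · have h2 : (n - 1 - k - 1) + 1 = n - 1 - k := by omega
        have h3 : (n - 1 - k - 1) + 1 < n := by omega
        rw [← h2, hstep _ h3, h2]
        have : n - 1 - (k + 1) = n - 1 - k - 1 := by omega
        rw [this]
        abel
  have hz0eq : zvec h P w n 0 = z 0 := by
    have := hzz (n - 1) (by omega)
    simpa [Nat.sub_sub_self, show n - 1 - (n-1) = 0 by omega] using this
  -- P(h) w = 0
  have hPh : (Polynomial.aeval h P) w = 0 := by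
    rw [← zvec_zero h w (le_of_eq hPd), hz0eq, hh0]
    abel
  -- span of h-powers
  have hspanh : ⊤ ≤ span ℝ (range fun i : Fin n => (h ^ (i : ℕ)) w) := by
    refine le_trans hztop (span_le.mpr ?_)
    rintro _ ⟨i, rfl⟩
    show z (i : ℕ) ∈ (span ℝ (range fun j : Fin n => (h ^ (j : ℕ)) w) : Set V)
    have : z (i : ℕ) = zvec h P w n i := by
      have := hzz (n - 1 - i) (by omega)
      have hi2 : n - 1 - (n - 1 - (i:ℕ)) = i := by omega
      rw [hi2] at this
      exact this.symm
    rw [this]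
    unfold zvec
    refine Submodule.sum_mem _ fun j hj => Submodule.smul_mem _ _ ?_
    have hjn : j < n := by
      have := Finset.mem_range.mp hj; omega
    exact subset_span ⟨⟨j, hjn⟩, rfl⟩
  have hind : LinearIndependent ℝ (fun i : Fin n => (h ^ (i : ℕ)) w) :=
    linearIndependent_of_top_le_span_of_card_eq_finrank hspanh hcard
  -- conclude charpoly = P
  refine ⟨ψ, hψmem, ?_⟩
  set Q := h.charpoly with hQ
  have hQM : Q.Monic := h.charpoly_monic
  have hQd : Q.natDegree = n := by rw [hQ, h.charpoly_natDegree, hn]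
  have hQn : Q.coeff n = 1 := by rw [← hQd]; exact hQM.coeff_natDegree
  set r := P - Q with hr
  have hrc : ∀ i : ℕ, n ≤ i → r.coeff i = 0 := by
    intro i hi
    rcases eq_or_lt_of_le hi with h1 | h1
    · rw [hr, Polynomial.coeff_sub, ← h1, hPn, hQn, sub_self]
    · rw [hr, Polynomial.coeff_sub, Polynomial.coeff_eq_zero_of_natDegree_lt (by omega),
        Polynomial.coeff_eq_zero_of_natDegree_lt (by omega), sub_self]
  have hrP : r = 0 := by
    by_cases hr0 : r = 0
    · exact hr0
    · exfalso
      have hrd : r.natDegree < n := by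
        by_contra hcon
        exact (Polynomial.leadingCoeff_ne_zero.mpr hr0) (hrc _ (le_of_not_gt hcon))
      have haev : (Polynomial.aeval h r) w = 0 := by
        rw [hr, map_sub]
        simp only [LinearMap.sub_apply]
        rw [hPh, h.aeval_self_charpoly]
        simp
      rw [Polynomial.aeval_eq_sum_range' hrd] at haev
      rw [LinearMap.sum_apply] at haev
      simp only [LinearMap.smul_apply] at haev
      rw [← Fin.sum_univ_eq_sum_range (fun i => r.coeff i • (h ^ i) w) n] at haev
      have hz := Fintype.linearIndependent_iff.mp hind (fun i : Fin n => r.coeff (i : ℕ)) haev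
      apply hr0
      ext i
      rcases lt_or_ge i n with h1 | h1
      · simpa using hz ⟨i, h1⟩
      · simpa using hrc i h1
  have : P = Q := by
    have := sub_eq_zero.mp hrP
    exact this
  rw [this, hQ, hh]

lemma heymann [FiniteDimensional ℝ V] (f : V →ₗ[ℝ] V) (W : Submodule ℝ V) {n : ℕ}
    (hn : n = finrank ℝ V) (hn0 : 0 < n)
    (hinv : ∀ S : Submodule ℝ V, W ≤ S → (∀ v ∈ S, f v ∈ S) → S = ⊤) :
    ∃ (w : V) (φ : V →ₗ[ℝ] V), w ∈ W ∧ (∀ v, φ v ∈ W) ∧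
      ⊤ ≤ span ℝ (range fun i : Fin n => ((f + φ) ^ (i : ℕ)) w) := by
  classical
  -- W contains a nonzero vector
  obtain ⟨b, hbW, hb0⟩ : ∃ b ∈ W, b ≠ 0 := by
    by_contra hcon
    push_neg at hcon
    have hWbot : W ≤ ⊥ := fun x hx => by simpa using hcon x hx
    have := hinv ⊥ hWbot (fun v hv => by
      have : v = 0 := by simpa using hv
      simp [this])
    have h0 : finrank ℝ V = 0 := by
      rw [← finrank_top ℝ V, ← this, finrank_bot]
    omega
  -- Good chains
  let Good : ℕ → (ℕ → V) → Prop := fun k x =>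
    LinearIndependent ℝ (fun i : Fin k => x i) ∧ x 0 ∈ W ∧
      ∀ i : ℕ, i + 1 < k → x (i + 1) - f (x i) ∈ W
  have main : ∀ j k (x : ℕ → V), 0 < k → Good k x → n ≤ k + j →
      ∃ y : ℕ → V, Good n y ∧ ⊤ ≤ span ℝ (range fun i : Fin n => y i) := by
    intro j
    induction j with
    | zero =>
      intro k x hk hG hnk
      have hkn : k ≤ n := by
        have := hG.1.fintype_card_le_finrank
        simpa [hn] using this
      have hkeq : k = n := by omega
      subst hkeq
      refine ⟨x, hG, ?_⟩
      haveI : Nonempty (Fin k) := ⟨⟨0, hk⟩⟩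
      rw [hG.1.span_eq_top_of_card_eq_finrank (by simpa using hn)]
    | succ j ih =>
      intro k x hk hG hnk
      by_cases hsp : ⊤ ≤ span ℝ (range fun i : Fin k => x i)
      · -- the family already spans; then k = n
        have hb := Basis.mk hG.1 hsp
        have hkn : k = n := by
          rw [hn, finrank_eq_card_basis hb, Fintype.card_fin]
        subst hkn
        exact ⟨x, hG, hsp⟩
      · -- extend the chain
        have hkn : k < n := by
          have hkle : k ≤ n := by
            have := hG.1.fintype_card_le_finrank
            simpa [hn] using this
          rcases eq_or_lt_of_le hkle with h1 | h1
          · exfalso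
            apply hsp
            haveI : Nonempty (Fin k) := ⟨⟨0, hk⟩⟩
            rw [hG.1.span_eq_top_of_card_eq_finrank (by simpa [h1] using hn)]
          · exact h1
        -- find y extending the chain
        have hex : ∃ y : V, y - f (x (k - 1)) ∈ W ∧
            y ∉ span ℝ (range fun i : Fin k => x i) := by
          by_contra hcon
          push_neg at hcon
          set S := span ℝ (range fun i : Fin k => x i) with hS
          have hfS : f (x (k - 1)) ∈ S := by
            have := hcon (f (x (k - 1))) (by simp)
            exact this
          have hWS : W ≤ S := by
            intro u hu
            have h1 : f (x (k - 1)) + u ∈ S := hcon _ (by simpa using hu)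
            have : u = (f (x (k - 1)) + u) - f (x (k - 1)) := by abel
            rw [this]
            exact Submodule.sub_mem _ h1 hfS
          have hSinv : ∀ v ∈ S, f v ∈ S := by
            have hgen : ∀ i : Fin k, f (x i) ∈ S := by
              intro i
              by_cases hik : (i : ℕ) + 1 < k
              · have h1 : x ((i : ℕ) + 1) - f (x i) ∈ W := hG.2.2 i hik
                have h2 : x ((i : ℕ) + 1) ∈ S := subset_span ⟨⟨(i : ℕ) + 1, hik⟩, rfl⟩
                have : f (x i) = x ((i : ℕ) + 1) - (x ((i : ℕ) + 1) - f (x i)) := by abel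
                rw [this]
                exact Submodule.sub_mem _ h2 (hWS h1)
              · have hik' : (i : ℕ) = k - 1 := by omega
                rw [hik']
                exact hfS
            intro v hv
            have : Submodule.map f S ≤ S := by
              rw [hS, Submodule.map_span_le]
              rintro _ ⟨i, rfl⟩
              exact hgen i
            exact this ⟨v, hv, rfl⟩
          exact hsp (le_of_eq (hinv S hWS hSinv).symm)
        obtain ⟨y, hyW, hyns⟩ := hex
        set x' : ℕ → V := Function.update x k y with hx'
        have hxx' : ∀ i : ℕ, i < k → x' i = x i := fun i hi =>
          Function.update_of_ne (by omega) _ _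
        have hx'k : x' k = y := Function.update_self _ _ _
        have hsnoc : (fun i : Fin (k + 1) => x' i) =
            Fin.snoc (fun i : Fin k => x i) y := by
          funext i
          rcases lt_or_ge (i : ℕ) k with h1 | h1
          · have hic : i = Fin.castSucc ⟨(i : ℕ), h1⟩ := by
              apply Fin.ext; rfl
            rw [hic, Fin.snoc_castSucc]
            exact hxx' _ h1
          · have hic : i = Fin.last k := by
              apply Fin.ext
              simp only [Fin.val_last]
              omega
            rw [hic, Fin.snoc_last]
            exact hx'k
        have hGood' : Good (k + 1) x' := by
          refine ⟨?_, ?_, ?_⟩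
          · rw [hsnoc]
            exact linearIndependent_fin_snoc.mpr ⟨hG.1, hyns⟩
          · rw [hxx' 0 hk]; exact hG.2.1
          · intro i hi
            rcases lt_or_ge (i + 1) k with h1 | h1
            · rw [hxx' _ h1, hxx' _ (by omega)]
              exact hG.2.2 i h1
            · have hik : i + 1 = k := by omega
              rw [hik, hx'k, hxx' _ (by omega)]
              have : k - 1 = i := by omega
              rw [← this]
              exact hyW
        exact ih (k + 1) x' (by omega) hGood' (by omega)
  obtain ⟨y, hGy, hsp⟩ := main n 1 (fun _ => b) one_pos
    ⟨(linearIndependent_unique_iff (v := fun _ : Fin 1 => b)).mpr hb0, hbW, fun i hi => by omega⟩ (by omega)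
  -- build φ from the chain
  have hcard : Fintype.card (Fin n) = finrank ℝ V := by simpa using hn
  let by' : Basis (Fin n) ℝ V := Basis.mk hGy.1 hsp
  have hby : ∀ i : Fin n, by' i = y i := fun i => by rw [Basis.coe_mk]
  set φ : V →ₗ[ℝ] V := by'.constr ℝ (fun i : Fin n =>
    if h : (i : ℕ) + 1 < n then y ((i : ℕ) + 1) - f (y i) else 0) with hφ
  have hφy : ∀ i : Fin n, φ (y i) =
      if h : (i : ℕ) + 1 < n then y ((i : ℕ) + 1) - f (y i) else 0 := by
    intro i
    conv_lhs => rw [← hby i]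
    exact by'.constr_basis ℝ _ i
  have hφW : ∀ v, φ v ∈ W := by
    intro v
    refine constr_mem by' _ _ (fun i => ?_) v
    by_cases h : (i : ℕ) + 1 < n
    · rw [dif_pos h]
      exact hGy.2.2 i h
    · rw [dif_neg h]; exact Submodule.zero_mem W
  set f' := f + φ with hf'
  have hstep : ∀ i : ℕ, i + 1 < n → f' (y i) = y (i + 1) := by
    intro i hi
    rw [hf']
    simp only [LinearMap.add_apply]
    have := hφy ⟨i, by omega⟩
    simp only [dif_pos hi] at this
    rw [this]
    abel
  have hpow : ∀ i : ℕ, i < n → (f' ^ i) (y 0) = y i := by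
    intro i
    induction i with
    | zero => intro _; simp
    | succ i ihi =>
      intro hi
      rw [pow_succ' f' i, Module.End.mul_apply, ihi (by omega), hstep i hi]
  refine ⟨y 0, φ, hGy.2.1, hφW, ?_⟩
  have : (fun i : Fin n => ((f + φ) ^ (i : ℕ)) (y 0)) = fun i : Fin n => y i := by
    funext i
    exact hpow i i.2
  rw [this]
  exact hsp

lemma charpoly_mulVecLin {ι : Type*} [Fintype ι] [DecidableEq ι] (A : Matrix ι ι ℝ) :
    A.charpoly = (A.mulVecLin).charpoly := by
  rw [← Matrix.toLin'_apply' A, ← LinearMap.charpoly_toMatrix (Matrix.toLin' A) (Pi.basisFun ℝ ι),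
    LinearMap.toMatrix_eq_toMatrix', LinearMap.toMatrix'_toLin']

lemma pow_mulVec {ι : Type*} [Fintype ι] [DecidableEq ι] (M : Matrix ι ι ℝ) (j : ℕ) (u : ι → ℝ) :
    (M ^ j).mulVec u = ((M.mulVecLin) ^ j) u := by
  induction j with
  | zero => simp [Matrix.one_mulVec]
  | succ j ih =>
    rw [pow_succ' M j, pow_succ' M.mulVecLin j]
    rw [← Matrix.mulVec_mulVec, ih]
    rfl

/-- The `Controllable` definition is kept verbatim below; this is the key matrix-level
pole placement result. -/
lemma matrix_pole_place {ι κ : Type*} [Fintype ι] [Fintype κ] [DecidableEq ι]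
    (M : Matrix ι ι ℝ) (B : Matrix ι κ ℝ)
    (hc : (Matrix.of (fun (i : ι) (jk : Fin (Fintype.card ι) × κ) =>
      (M ^ (jk.1 : ℕ) * B) i jk.2)).rank = Fintype.card ι)
    (P : ℝ[X]) (hP : P.Monic) (hPd : P.natDegree = Fintype.card ι) :
    ∃ H : Matrix κ ι ℝ, (M + B * H).charpoly = P := by
  classical
  by_cases hn0 : Fintype.card ι = 0
  · haveI : IsEmpty ι := Fintype.card_eq_zero_iff.mp hn0
    refine ⟨0, ?_⟩
    have h1 : P = 1 := hP.natDegree_eq_zero.mp (by rw [hPd, hn0])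
    rw [h1]
    unfold Matrix.charpoly
    exact Matrix.det_isEmpty
  have hn0' : 0 < Fintype.card ι := Nat.pos_of_ne_zero hn0
  set n := Fintype.card ι with hncard
  have hn : n = finrank ℝ (ι → ℝ) := by rw [Module.finrank_pi]
  set f := M.mulVecLin with hf
  set W := LinearMap.range B.mulVecLin with hW
  -- invariance property from controllability
  have hinv : ∀ S : Submodule ℝ (ι → ℝ), W ≤ S → (∀ v ∈ S, f v ∈ S) → S = ⊤ := by
    intro S hWS hfS
    set CM := Matrix.of (fun (i : ι) (jk : Fin (Fintype.card ι) × κ) =>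
      (M ^ (jk.1 : ℕ) * B) i jk.2) with hCM
    have hcols : span ℝ (Set.range CMᵀ) = ⊤ := by
      apply Submodule.eq_top_of_finrank_eq
      change finrank ℝ (span ℝ (Set.range (Matrix.col CM))) = _
      rw [← Matrix.rank_eq_finrank_span_cols, hc, hn]
    have hcolsS : span ℝ (Set.range CMᵀ) ≤ S := by
      rw [span_le]
      rintro _ ⟨jk, rfl⟩
      have hcol : CMᵀ jk = ((M ^ (jk.1 : ℕ)) * B).mulVec (Pi.single jk.2 1) := by
        rw [Matrix.mulVec_single_one]
        funext i
        simp [hCM, Matrix.transpose_apply]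
      rw [hcol, ← Matrix.mulVec_mulVec, pow_mulVec]
      have hbase : B.mulVec (Pi.single jk.2 1) ∈ S :=
        hWS ⟨Pi.single jk.2 1, rfl⟩
      -- f-powers stay in S
      have : ∀ j : ℕ, ∀ v ∈ S, (f ^ j) v ∈ S := by
        intro j
        induction j with
        | zero => intro v hv; simpa using hv
        | succ j ihj =>
          intro v hv
          rw [pow_succ' f j, Module.End.mul_apply]
          exact hfS _ (ihj v hv)
      exact this _ _ hbase
    exact le_antisymm le_top (le_trans (le_of_eq hcols.symm) hcolsS)
  obtain ⟨w, φ, hwW, hφW, hsp⟩ := heymann f W hn hn0' hinv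
  obtain ⟨ψ, hψmem, hchar⟩ := cyclic_pole_place (f + φ) w hn hn0' hsp P hP hPd
  set χ : (ι → ℝ) →ₗ[ℝ] (ι → ℝ) := φ + ψ with hχ
  have hχW : ∀ v, χ v ∈ W := by
    intro v
    refine Submodule.add_mem _ (hφW v) ?_
    have h1 : span ℝ ({w} : Set (ι → ℝ)) ≤ W := by
      rw [span_le, Set.singleton_subset_iff]
      exact hwW
    exact h1 (hψmem v)
  have hex : ∀ i : ι, ∃ u : κ → ℝ, B.mulVec u = χ (Pi.single i 1) := by
    intro i
    obtain ⟨u, hu⟩ := hχW (Pi.single i 1)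
    exact ⟨u, hu⟩
  choose u hu using hex
  set H : Matrix κ ι ℝ := Matrix.of (fun k i => u i k) with hH
  have hBH : (B * H).mulVecLin = χ := by
    apply (Pi.basisFun ℝ ι).ext
    intro i
    rw [Pi.basisFun_apply]
    rw [Matrix.mulVecLin_apply, ← Matrix.mulVec_mulVec]
    have hHi : H.mulVec (Pi.single i 1) = u i := by
      rw [Matrix.mulVec_single_one]
      funext k
      simp [hH]
    rw [hHi, hu i]
  refine ⟨H, ?_⟩
  rw [charpoly_mulVecLin, Matrix.mulVecLin_add, hBH]
  have : f + χ = (f + φ) + ψ := by rw [hχ]; abel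
  rw [this]
  exact hchar

lemma charpoly_conj {ι : Type*} [Fintype ι] [DecidableEq ι] (T U : Matrix ι ι ℝ)
    (hT : T * T = 1) : (T * U * T).charpoly = U.charpoly := by
  have hTT : (T.map (C : ℝ → ℝ[X])) * (T.map C) = 1 := by
    rw [← Matrix.map_mul, hT, Matrix.map_one C C_0 C_1]
  have hch : charmatrix (T * U * T) = T.map C * charmatrix U * T.map C := by
    unfold charmatrix
    simp only [RingHom.mapMatrix_apply]
    rw [Matrix.mul_sub, Matrix.sub_mul]
    congr 1
    · rw [← Matrix.scalar_commute (X : ℝ[X]) (fun r => Commute.all X r) (T.map C),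
        Matrix.mul_assoc, hTT, Matrix.mul_one]
    · rw [← Matrix.map_mul, ← Matrix.map_mul]
  unfold Matrix.charpoly
  rw [hch, Matrix.det_mul, Matrix.det_mul]
  have h2 : (T.map (C : ℝ → ℝ[X])).det * (T.map C).det = 1 := by
    rw [← Matrix.det_mul, hTT, Matrix.det_one]
  calc (T.map (C : ℝ → ℝ[X])).det * (charmatrix U).det * (T.map C).det
      = ((T.map C).det * (T.map C).det) * (charmatrix U).det := by ring
    _ = (charmatrix U).det := by rw [h2, one_mul]

end PolePlace

/-- Separation principle / pole placement: under detectability of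
`(A − 2ΘR_c, C)` and controllability of `(A + 2ΘR_c, B₂)` (with `R_c` symmetric),
every monic degree-`n` real polynomial `P` can be realized as the regulator part of
the closed-loop characteristic polynomial, with a Hurwitz observer error matrix. -/
theorem observer_based_pole_placement (m p q : ℕ)
    (A : Matrix (Fin m × Fin 2) (Fin m × Fin 2) ℝ)
    (C : Matrix (Fin p × Fin 2) (Fin m × Fin 2) ℝ)
    (B₂ : Matrix (Fin m × Fin 2) (Fin q × Fin 2) ℝ)
    (Rc : Matrix (Fin m × Fin 2) (Fin m × Fin 2) ℝ) (hRc : Rc = Rcᵀ)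
    (hdet : ∃ G₁ : Matrix (Fin m × Fin 2) (Fin p × Fin 2) ℝ,
      IsHurwitz (A - G₁ * C - 2 • (Theta m * Rc)))
    (hctrb : Controllable (A + 2 • (Theta m * Rc)) B₂)
    (P : Polynomial ℝ) (hmonic : P.Monic)
    (hdeg : P.natDegree = Fintype.card (Fin m × Fin 2)) :
    ∃ (G₁ : Matrix (Fin m × Fin 2) (Fin p × Fin 2) ℝ)
      (H : Matrix (Fin q × Fin 2) (Fin m × Fin 2) ℝ),
      (fromBlocks A (B₂ * H + 2 • (Theta m * Rc)) (G₁ * C + 2 • (Theta m * Rcᵀ))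
          (A - G₁ * C + B₂ * H)).charpoly =
        P * (A - G₁ * C - 2 • (Theta m * Rc)).charpoly ∧
      (A + B₂ * H + 2 • (Theta m * Rc)).charpoly = P ∧
      IsHurwitz (A - G₁ * C - 2 • (Theta m * Rc)) := by
  obtain ⟨G₁, hG⟩ := hdet
  obtain ⟨H, hH⟩ := PolePlace.matrix_pole_place (A + 2 • (Theta m * Rc)) B₂ hctrb P hmonic hdeg
  have hFP : (A + B₂ * H + 2 • (Theta m * Rc)).charpoly = P := by
    rw [show A + B₂ * H + 2 • (Theta m * Rc) = A + 2 • (Theta m * Rc) + B₂ * H by abel]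
    exact hH
  refine ⟨G₁, H, ?_, hFP, hG⟩
  rw [← hRc]
  set θ := 2 • (Theta m * Rc) with hθ
  set K := B₂ * H + θ with hK
  set E := A - G₁ * C - θ with hE
  set F := A + B₂ * H + θ with hF
  set T : Matrix ((Fin m × Fin 2) ⊕ (Fin m × Fin 2)) ((Fin m × Fin 2) ⊕ (Fin m × Fin 2)) ℝ :=
    fromBlocks 1 0 1 (-1) with hT
  have hTT : T * T = 1 := by
    rw [hT, Matrix.fromBlocks_multiply, ← Matrix.fromBlocks_one]
    rw [Matrix.fromBlocks_inj]
    refine ⟨?_, ?_, ?_, ?_⟩ <;>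
      simp [Matrix.neg_mul, Matrix.mul_neg]
  have hsim : fromBlocks A K (G₁ * C + θ) (A - G₁ * C + B₂ * H)
      = T * (fromBlocks F (-K) 0 E) * T := by
    rw [hT, Matrix.fromBlocks_multiply, Matrix.fromBlocks_multiply, Matrix.fromBlocks_inj]
    refine ⟨?_, ?_, ?_, ?_⟩ <;>
      simp only [Matrix.one_mul, Matrix.zero_mul, Matrix.mul_zero, Matrix.mul_one,
        Matrix.neg_mul, Matrix.mul_neg, Matrix.mul_one, neg_neg, add_zero, zero_add,
        hK, hE, hF] <;>
      abel
  rw [hsim, PolePlace.charpoly_conj _ _ hTT, Matrix.charpoly_fromBlocks_zero₂₁, hF, hFP]
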